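/- If a preference relation ≿ on ℝ^L_+ is monotone, strictly convex and continuous, then its Walrasian demand f^≿(p), the unique maximizer of ≿ on B(p) = {x : p·x ≤ 1}, exists, is unique, satisfies Walras' law p·f^≿(p) = 1, and the resulting demand function is continuous in p on ℝ^L_{++}. -/

import Mathlib

namespace Paper

variable {L H : ℕ}

/-- Inner product of a price vector and a commodity bundle. -/
noncomputable def dot (p x : Fin L → ℝ) : ℝ := ∑ i, p i * x i

/-- membership in the consumption set X = ℝ^L_+ -/
def nneg (x : Fin L → ℝ) : Prop := ∀ i, 0 ≤ x i

/-- strictly positive vector (interior of X, resp. p ≫ 0) -/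
def posv (x : Fin L → ℝ) : Prop := ∀ i, 0 < x i

/-- a preference relation on bundles -/
abbrev Pref (L : ℕ) := (Fin L → ℝ) → (Fin L → ℝ) → Prop

/-- strict preference x ≻ y -/
def PStrict (R : Pref L) (x y : Fin L → ℝ) : Prop := R x y ∧ ¬ R y x

/-- complete and transitive preference relation on ℝ^L_+ -/
def IsPref (R : Pref L) : Prop :=
  (∀ x y, nneg x → nneg y → R x y ∨ R y x) ∧
  (∀ x y z, R x y → R y z → R x z)

/-- monotone: u ≫ v implies u ≻ v -/
def MonoWeak (R : Pref L) : Prop :=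
  ∀ u v : Fin L → ℝ, nneg v → (∀ i, v i < u i) → PStrict R u v

/-- monotone: u ≥ v, u ≠ v implies u ≻ v -/
def MonoStrong (R : Pref L) : Prop :=
  ∀ u v : Fin L → ℝ, nneg v → (∀ i, v i ≤ u i) → u ≠ v → PStrict R u v

/-- continuity: closed upper and lower contour sets -/
def ContPref (R : Pref L) : Prop :=
  ∀ x : Fin L → ℝ, IsClosed {y | R y x} ∧ IsClosed {y | R x y}

/-- convexity: u ≿ v implies λu + (1-λ)v ≿ v -/
def PrefConvex (R : Pref L) : Prop :=
  ∀ u v : Fin L → ℝ, nneg u → nneg v → R u v →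
    ∀ l : ℝ, 0 ≤ l → l ≤ 1 → R (l • u + (1 - l) • v) v

/-- strict convexity: u ≿ v, u ≠ v implies λu + (1-λ)v ≻ v for λ ∈ (0,1) -/
def PrefStrictConvex (R : Pref L) : Prop :=
  ∀ u v : Fin L → ℝ, nneg u → nneg v → R u v → u ≠ v →
    ∀ l : ℝ, 0 < l → l < 1 → PStrict R (l • u + (1 - l) • v) v

/-- the budget set B(p) = {x ∈ ℝ^L_+ : p·x ≤ 1} -/
def Budget (p x : Fin L → ℝ) : Prop := nneg x ∧ dot p x ≤ 1

/-- x is a ≿-maximizer on the budget set B(p) (Walrasian demand) -/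
def IsDemand (R : Pref L) (p x : Fin L → ℝ) : Prop :=
  Budget p x ∧ ∀ y, Budget p y → R x y

/-- membership in the box X_r = {w : (1+r)⁻¹ 𝟙 ≤ w ≤ (1+r) 𝟙} -/
def InBox (r : ℝ) (x : Fin L → ℝ) : Prop := ∀ i, (1 + r)⁻¹ ≤ x i ∧ x i ≤ 1 + r

/-- Lipschitzian preferences in the sense of Mas-Colell (1977) -/
def Lipschitzian (R : Pref L) : Prop :=
  ∀ r : ℝ, 0 < r → ∃ K : ℝ, 0 < K ∧ ∃ ε : ℝ, 0 < ε ∧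
    ∀ x y z : Fin L → ℝ, InBox r x → InBox r y → InBox r z →
      R x y → R y x → ‖x - z‖ < ε →
      Metric.infDist x {w | R w z} ≤ K * Metric.infDist y {w | R w z}

/-- x is strictly revealed preferred to y through the first n observations:
there is a chain x ≥ x_{i_1}, p_{i_j}·x_{i_{j+1}} < p_{i_j}·x_{i_j}, x_{i_N} ≥ y -/
def RevChain (p xo : ℕ → Fin L → ℝ) (n : ℕ) (x y : Fin L → ℝ) : Prop :=
  ∃ N : ℕ, ∃ idx : Fin (N + 1) → ℕ,
    (∀ j, idx j < n) ∧
    (∀ i, xo (idx 0) i ≤ x i) ∧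
    (∀ j : Fin N, dot (p (idx j.castSucc)) (xo (idx j.succ)) <
       dot (p (idx j.castSucc)) (xo (idx j.castSucc))) ∧
    (∀ i, y i ≤ xo (idx (Fin.last N)) i)

/-- the revealed demand correspondence x^{R_n}(q) -/
def RevDemand (p xo : ℕ → Fin L → ℝ) (n : ℕ) (q : Fin L → ℝ) : Set (Fin L → ℝ) :=
  {x | nneg x ∧ dot q x = 1 ∧
    ¬ ∃ x', nneg x' ∧ dot q x' ≤ 1 ∧ RevChain p xo n x' x}

/-- the strong axiom of revealed preference for the first n observations -/
def SARP (p xo : ℕ → Fin L → ℝ) (n : ℕ) : Prop :=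
  ∀ m : ℕ, 0 < m → ∀ idx : Fin (m + 1) → ℕ, (∀ j, idx j < n) →
    (∀ j j' : Fin (m + 1), j ≠ j' → xo (idx j) ≠ xo (idx j')) →
    (∀ j : Fin m, dot (p (idx j.castSucc)) (xo (idx j.succ)) ≤
       dot (p (idx j.castSucc)) (xo (idx j.castSucc))) →
    dot (p (idx (Fin.last m))) (xo (idx 0)) >
      dot (p (idx (Fin.last m))) (xo (idx (Fin.last m)))

/-- the standard regularity package: complete, transitive, continuous,
monotone, strictly convex -/
def Regular (R : Pref L) : Prop :=
  IsPref R ∧ ContPref R ∧ MonoStrong R ∧ PrefStrictConvex R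

/-- aggregate demand d(p, w¹,…,w^H) = Σ_h f^h(p/w^h), where f^h is the
individual demand function at income 1 -/
noncomputable def aggDem (f : Fin H → (Fin L → ℝ) → (Fin L → ℝ)) (p : Fin L → ℝ) (w : Fin H → ℝ) :
    Fin L → ℝ :=
  fun i => ∑ h, f h (fun j => p j / w h) i

/-- membership in the (relatively interior) simplex Δ^{L-1} -/
def InSimplex (p : Fin L → ℝ) : Prop := posv p ∧ ∑ i, p i = 1

/-- p is a Walrasian equilibrium price for the endowment profile eprof -/
def EqPrice (f : Fin H → (Fin L → ℝ) → (Fin L → ℝ)) (eprof : Fin H → Fin L → ℝ)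
    (p : Fin L → ℝ) : Prop :=
  InSimplex p ∧ ∀ i, ∑ h, (f h (fun j => p j / dot p (eprof h)) i - eprof h i) = 0

/-- the income box W = ×_h [w̲_h, w̄_h] -/
def InW (wlo whi : Fin H → ℝ) (w : Fin H → ℝ) : Prop := ∀ h, wlo h ≤ w h ∧ w h ≤ whi h

/-- the set C_n of allocation profiles consistent with the first n observations:
adding up to aggregate demand, on the budget hyperplanes, satisfying SARP -/
def InC (p : ℕ → Fin L → ℝ) (w : ℕ → Fin H → ℝ) (D : ℕ → Fin L → ℝ) (n : ℕ)
    (xa : ℕ → Fin H → Fin L → ℝ) : Prop :=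
  (∀ k < n, ∀ h, nneg (xa k h)) ∧
  (∀ k < n, ∀ i, ∑ h, xa k h i = D k i) ∧
  (∀ k < n, ∀ h, dot (p k) (xa k h) = w k h) ∧
  (∀ h, SARP p (fun k => xa k h) n)

/-- x is equilibrium-revealed preferred to y by individual h given n observations -/
def EqRevPref (p : ℕ → Fin L → ℝ) (w : ℕ → Fin H → ℝ) (D : ℕ → Fin L → ℝ)
    (n : ℕ) (h : Fin H) (x y : Fin L → ℝ) : Prop :=
  ∀ xa : ℕ → Fin H → Fin L → ℝ, InC p w D n xa → RevChain p (fun k => xa k h) n x y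

/-- the equilibrium revealed demand correspondence x^{R^h_n}(q) -/
def EqRevDemand (p : ℕ → Fin L → ℝ) (w : ℕ → Fin H → ℝ) (D : ℕ → Fin L → ℝ)
    (n : ℕ) (h : Fin H) (q : Fin L → ℝ) : Set (Fin L → ℝ) :=
  {x | nneg x ∧ dot q x = 1 ∧
    ¬ ∃ x', nneg x' ∧ dot q x' ≤ 1 ∧ EqRevPref p w D n h x' x}

/-- Assumption 1: any preference profile distinct from R generates a different
aggregate demand at some price and income profile in ℝ^L_{++} × W -/
def Assumption1 (R : Fin H → Pref L) (f : Fin H → (Fin L → ℝ) → (Fin L → ℝ))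
    (wlo whi : Fin H → ℝ) : Prop :=
  ∀ (R' : Fin H → Pref L) (f' : Fin H → (Fin L → ℝ) → (Fin L → ℝ)),
    (∀ h, Regular (R' h) ∧ Lipschitzian (R' h)) →
    (∀ h q, posv q → IsDemand (R' h) q (f' h q)) →
    R' ≠ R →
    ∃ (pp : Fin L → ℝ) (ww : Fin H → ℝ), posv pp ∧ InW wlo whi ww ∧
      aggDem f' pp ww ≠ aggDem f pp ww

/-- the revealed approximate equilibrium correspondence P^{R_n}(e^H) -/
def RevApproxEq (p : ℕ → Fin L → ℝ) (w : ℕ → Fin H → ℝ) (D : ℕ → Fin L → ℝ)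
    (n : ℕ) (eprof : Fin H → Fin L → ℝ) : Set (Fin L → ℝ) :=
  {q | InSimplex q ∧
    ∃ xa : Fin H → Fin L → ℝ,
      (∀ h, nneg (xa h)) ∧
      (∀ h, dot q (xa h) = dot q (eprof h)) ∧
      (∀ i, ∑ h, (xa h i - eprof h i) = 0) ∧
      ¬ ∃ ya : Fin H → Fin L → ℝ,
        (∀ h, nneg (ya h)) ∧ (∀ h, dot q (ya h) = dot q (eprof h)) ∧
        (∀ h, EqRevPref p w D n h (ya h) (xa h))}

/-! ### Auxiliary lemmas for Statement 5 -/

open Filter Topology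

lemma dot_continuous2 :
    Continuous (fun qx : (Fin L → ℝ) × (Fin L → ℝ) => dot qx.1 qx.2) := by
  unfold dot
  exact continuous_finset_sum _ fun i _ =>
    ((continuous_apply i).comp continuous_fst).mul ((continuous_apply i).comp continuous_snd)

lemma dot_continuous (p : Fin L → ℝ) : Continuous (fun x : Fin L → ℝ => dot p x) :=
  dot_continuous2.comp (Continuous.prodMk_right p)

lemma dot_smul' (p : Fin L → ℝ) (c : ℝ) (x : Fin L → ℝ) :
    dot p (c • x) = c * dot p x := by
  unfold dot
  rw [Finset.mul_sum]
  refine Finset.sum_congr rfl fun i _ => ?_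
  simp only [Pi.smul_apply, smul_eq_mul]; ring

lemma dot_add' (p u v : Fin L → ℝ) : dot p (u + v) = dot p u + dot p v := by
  unfold dot
  rw [← Finset.sum_add_distrib]
  refine Finset.sum_congr rfl fun i _ => ?_
  simp only [Pi.add_apply]; ring

lemma isClosed_nneg : IsClosed {x : Fin L → ℝ | nneg x} := by
  have h : {x : Fin L → ℝ | nneg x} = ⋂ i, {x | 0 ≤ x i} := by
    ext x; simp [nneg, Set.mem_iInter]
  rw [h]
  exact isClosed_iInter fun i => isClosed_le continuous_const (continuous_apply i)

lemma isClosed_budget (p : Fin L → ℝ) : IsClosed {x : Fin L → ℝ | Budget p x} := by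
  have h : {x : Fin L → ℝ | Budget p x} = {x | nneg x} ∩ {x | dot p x ≤ 1} := rfl
  rw [h]
  exact isClosed_nneg.inter (isClosed_le (dot_continuous p) continuous_const)

lemma budget_coord_le {p x : Fin L → ℝ} (hp : posv p) (hx : Budget p x) (i : Fin L) :
    x i ≤ (p i)⁻¹ := by
  have h1 : p i * x i ≤ dot p x :=
    Finset.single_le_sum (fun j _ => mul_nonneg (hp j).le (hx.1 j)) (Finset.mem_univ i)
  have h2 : p i * x i ≤ 1 := h1.trans hx.2
  rw [inv_eq_one_div, le_div_iff₀ (hp i)]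
  linarith [h2, mul_comm (p i) (x i)]

lemma budget_compact {p : Fin L → ℝ} (hp : posv p) :
    IsCompact {x : Fin L → ℝ | Budget p x} := by
  refine IsCompact.of_isClosed_subset (isCompact_univ_pi fun i => (isCompact_Icc :
    IsCompact (Set.Icc (0:ℝ) ((p i)⁻¹)))) (isClosed_budget p) ?_
  intro x hx
  exact Set.mem_univ_pi.mpr fun i => Set.mem_Icc.mpr ⟨hx.1 i, budget_coord_le hp hx i⟩

lemma exists_finset_max {R : Pref L} (hP : IsPref R) {S : Set (Fin L → ℝ)}
    (hsub : ∀ x ∈ S, nneg x) (hne : S.Nonempty) (u : Finset (Fin L → ℝ)) :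
    (∀ y ∈ u, y ∈ S) → ∃ x ∈ S, ∀ y ∈ u, R x y := by
  classical
  induction u using Finset.induction_on with
  | empty =>
    intro _
    obtain ⟨x, hx⟩ := hne
    exact ⟨x, hx, fun y hy => absurd hy (Finset.notMem_empty y)⟩
  | @insert a s ha ih =>
    intro hu
    obtain ⟨x, hxS, hxmax⟩ := ih (fun y hy => hu y (Finset.mem_insert_of_mem hy))
    have haS : a ∈ S := hu a (Finset.mem_insert_self a s)
    have haa : R a a := by
      rcases hP.1 a a (hsub a haS) (hsub a haS) with h | h <;> exact h
    rcases hP.1 x a (hsub x hxS) (hsub a haS) with h | h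
    · refine ⟨x, hxS, fun y hy => ?_⟩
      rcases Finset.mem_insert.mp hy with rfl | hy
      · exact h
      · exact hxmax y hy
    · refine ⟨a, haS, fun y hy => ?_⟩
      rcases Finset.mem_insert.mp hy with rfl | hy
      · exact haa
      · exact hP.2 a x y h (hxmax y hy)

lemma exists_pref_max {R : Pref L} (hP : IsPref R) (hC : ContPref R)
    {S : Set (Fin L → ℝ)} (hScomp : IsCompact S) (hne : S.Nonempty)
    (hsub : ∀ x ∈ S, nneg x) : ∃ x ∈ S, ∀ y ∈ S, R x y := by
  classical
  have key : (S ∩ ⋂ y : S, {x | R x y.1}).Nonempty := by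
    refine hScomp.inter_iInter_nonempty (fun y : S => {x | R x y.1})
      (fun y => (hC y.1).1) (fun u => ?_)
    obtain ⟨x, hxS, hxmax⟩ := exists_finset_max hP hsub hne (u.image Subtype.val)
      (fun y hy => by
        obtain ⟨z, _, rfl⟩ := Finset.mem_image.mp hy
        exact z.2)
    refine ⟨x, hxS, Set.mem_iInter₂.mpr fun y hy => ?_⟩
    exact hxmax y.1 (Finset.mem_image.mpr ⟨y, hy, rfl⟩)
  obtain ⟨x, hxS, hx⟩ := key
  refine ⟨x, hxS, fun y hy => ?_⟩
  exact Set.mem_iInter.mp hx ⟨y, hy⟩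

lemma demand_exists {R : Pref L} (hP : IsPref R) (hC : ContPref R)
    {p : Fin L → ℝ} (hp : posv p) : ∃ x, IsDemand R p x := by
  have hne : {x : Fin L → ℝ | Budget p x}.Nonempty :=
    ⟨0, fun i => le_refl 0, by simp [dot]⟩
  obtain ⟨x, hxB, hx⟩ := exists_pref_max hP hC (budget_compact hp) hne
    (fun x hx => hx.1)
  exact ⟨x, hxB, hx⟩

lemma demand_unique {R : Pref L} (hSC : PrefStrictConvex R) {p x y : Fin L → ℝ}
    (hx : IsDemand R p x) (hy : IsDemand R p y) : x = y := by
  by_contra hne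
  have hxy : R x y := hx.2 y hy.1
  have hs := hSC x y hx.1.1 hy.1.1 hxy hne (1/2) (by norm_num) (by norm_num)
  set z := (1/2 : ℝ) • x + (1 - 1/2 : ℝ) • y with hz
  have hzB : Budget p z := by
    constructor
    · intro i
      have := hx.1.1 i; have := hy.1.1 i
      simp only [hz, Pi.add_apply, Pi.smul_apply, smul_eq_mul]
      nlinarith
    · have : dot p z = (1/2 : ℝ) * dot p x + (1 - 1/2 : ℝ) * dot p y := by
        rw [hz, dot_add', dot_smul', dot_smul']
      rw [this]
      have h1 := hx.1.2; have h2 := hy.1.2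
      linarith
  exact hs.2 (hy.2 z hzB)

lemma demand_walras (hL : 0 < L) {R : Pref L} (hM : MonoStrong R) {p x : Fin L → ℝ}
    (hp : posv p) (hd : IsDemand R p x) : dot p x = 1 := by
  by_contra hne
  have hlt : dot p x < 1 := lt_of_le_of_ne hd.1.2 hne
  have : Nonempty (Fin L) := Fin.pos_iff_nonempty.mp hL
  have hsum : 0 < ∑ i, p i := Finset.sum_pos (fun i _ => hp i) Finset.univ_nonempty
  set ε := (1 - dot p x) / ∑ i, p i with hε
  have hεpos : 0 < ε := div_pos (by linarith) hsum
  set x' : Fin L → ℝ := fun i => x i + ε with hx'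
  have hdotx' : dot p x' = 1 := by
    have : dot p x' = dot p x + (∑ i, p i) * ε := by
      unfold dot
      rw [Finset.sum_mul, ← Finset.sum_add_distrib]
      exact Finset.sum_congr rfl fun i _ => by simp only [hx']; ring
    rw [this, hε, mul_div_cancel₀ _ (ne_of_gt hsum)]
    ring
  have hB : Budget p x' := ⟨fun i => by have := hd.1.1 i; simp only [hx']; linarith,
    le_of_eq hdotx'⟩
  have hne' : x' ≠ x := by
    intro h
    have := congrFun h ⟨0, hL⟩
    simp only [hx'] at this
    linarith
  have hstrict := hM x' x hd.1.1 (fun i => by simp only [hx']; linarith) hne'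
  exact hstrict.2 (hd.2 x' hB)

set_option maxHeartbeats 1000000 in
lemma demand_limit {R : Pref L} (hC : ContPref R) {p0 : Fin L → ℝ}
    {p : ℕ → Fin L → ℝ} (hpt : Tendsto p atTop (𝓝 p0))
    {x : ℕ → Fin L → ℝ} {a : Fin L → ℝ}
    (hxd : ∀ᶠ n in atTop, IsDemand R (p n) (x n))
    (hxt : Tendsto x atTop (𝓝 a)) :
    IsDemand R p0 a := by
  have hpx : Tendsto (fun n => (p n, x n)) atTop (𝓝 (p0, a)) := hpt.prodMk_nhds hxt
  have hdot : Tendsto (fun n => dot (p n) (x n)) atTop (𝓝 (dot p0 a)) :=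
    (dot_continuous2.tendsto (p0, a)).comp hpx
  have hannneg : nneg a :=
    isClosed_nneg.mem_of_tendsto hxt (hxd.mono fun n h => h.1.1)
  have hale : dot p0 a ≤ 1 := le_of_tendsto hdot (hxd.mono fun n h => h.1.2)
  refine ⟨⟨hannneg, hale⟩, fun y hy => ?_⟩
  have claim : ∀ z : Fin L → ℝ, nneg z → dot p0 z < 1 → R a z := by
    intro z hz hzlt
    have hdz : Tendsto (fun n => dot (p n) z) atTop (𝓝 (dot p0 z)) :=
      ((dot_continuous2.comp (continuous_id.prodMk continuous_const)).tendsto p0).comp hpt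
    have hev : ∀ᶠ n in atTop, dot (p n) z < 1 := hdz.eventually_lt_const hzlt
    have hRz : ∀ᶠ n in atTop, x n ∈ {w | R w z} := by
      filter_upwards [hev, hxd] with n h1 h2
      exact h2.2 z ⟨hz, h1.le⟩
    exact (hC z).1.mem_of_tendsto hxt hRz
  -- approximate y from inside the budget line
  have hRθ : ∀ k : ℕ, R a ((1 - 1/(k+1) : ℝ) • y) := by
    intro k
    have hθ0 : (0:ℝ) ≤ 1 - 1/(k+1) := by
      have h1 : (1:ℝ)/(k+1) ≤ 1 := by
        rw [div_le_one (by positivity)]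
        have : (0:ℝ) ≤ (k:ℝ) := Nat.cast_nonneg k
        linarith
      linarith
    have hθ1 : (1 - 1/(k+1) : ℝ) < 1 := by
      have : (0:ℝ) < 1/(k+1) := by positivity
      linarith
    refine claim _ (fun i => by
      have := hy.1 i
      simp only [Pi.smul_apply, smul_eq_mul]
      exact mul_nonneg hθ0 this) ?_
    rw [dot_smul']
    calc (1 - 1/(k+1) : ℝ) * dot p0 y ≤ (1 - 1/(k+1) : ℝ) * 1 :=
          mul_le_mul_of_nonneg_left hy.2 hθ0
      _ < 1 := by linarith
  have hθt : Tendsto (fun k : ℕ => ((1 - 1/(k+1) : ℝ))) atTop (𝓝 1) := by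
    have := tendsto_one_div_add_atTop_nhds_zero_nat (𝕜 := ℝ)
    have h := tendsto_const_nhds.sub this (f := fun _ : ℕ => (1:ℝ))
    simpa using h
  have hyt : Tendsto (fun k : ℕ => (1 - 1/(k+1) : ℝ) • y) atTop (𝓝 y) := by
    have := hθt.smul_const y
    simpa using this
  exact (hC a).2.mem_of_tendsto hyt (Filter.Eventually.of_forall hRθ)


/-- existence, uniqueness, Walras' law and continuity of Walrasian
demand for monotone, strictly convex, continuous preferences. -/
theorem statement5 (hL : 0 < L) (R : Pref L)
    (hP : IsPref R) (hC : ContPref R) (hM : MonoStrong R) (hSC : PrefStrictConvex R) :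
    ∃ f : (Fin L → ℝ) → (Fin L → ℝ),
      (∀ p, posv p →
        IsDemand R p (f p) ∧ (∀ x, IsDemand R p x → x = f p) ∧ dot p (f p) = 1) ∧
      ContinuousOn f {p | posv p} := by
  classical
  have hex : ∀ p : Fin L → ℝ, posv p → ∃ x, IsDemand R p x :=
    fun p hp => demand_exists hP hC hp
  set f : (Fin L → ℝ) → (Fin L → ℝ) :=
    fun p => if h : posv p then (hex p h).choose else 0 with hf
  have hfd : ∀ p, posv p → IsDemand R p (f p) := by
    intro p hp
    simp only [hf, dif_pos hp]
    exact (hex p hp).choose_spec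
  have huniq : ∀ p, posv p → ∀ x, IsDemand R p x → x = f p :=
    fun p hp x hx => demand_unique hSC hx (hfd p hp)
  refine ⟨f, fun p hp => ⟨hfd p hp, huniq p hp, demand_walras hL hM hp (hfd p hp)⟩, ?_⟩
  intro p0 hp0
  have hp0' : posv p0 := hp0
  show Filter.Tendsto f (nhdsWithin p0 {p | posv p}) (nhds (f p0))
  rw [Filter.tendsto_iff_seq_tendsto]
  intro u hu
  have hupos : ∀ᶠ n in Filter.atTop, posv (u n) :=
    hu.eventually (self_mem_nhdsWithin)
  have hut : Filter.Tendsto u Filter.atTop (nhds p0) := hu.mono_right nhdsWithin_le_nhds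
  have hhalf : ∀ᶠ n in Filter.atTop, ∀ i, p0 i / 2 < u n i := by
    rw [Filter.eventually_all]
    intro i
    have hti : Filter.Tendsto (fun n => u n i) Filter.atTop (nhds (p0 i)) :=
      ((continuous_apply i).tendsto p0).comp hut
    exact hti.eventually_const_lt (half_lt_self (hp0' i))
  apply Filter.tendsto_of_subseq_tendsto
  intro ns hns
  set K : Set (Fin L → ℝ) := Set.pi Set.univ (fun i => Set.Icc 0 (2 * (p0 i)⁻¹)) with hK
  have hKcomp : IsCompact K := isCompact_univ_pi fun i => isCompact_Icc
  have hmemK : ∀ᶠ n in Filter.atTop, f (u n) ∈ K := by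
    filter_upwards [hupos, hhalf] with n h1 h2
    refine Set.mem_univ_pi.mpr fun i => Set.mem_Icc.mpr ⟨(hfd (u n) h1).1.1 i, ?_⟩
    have hb : f (u n) i ≤ (u n i)⁻¹ := budget_coord_le h1 (hfd (u n) h1).1 i
    have hbb : (u n i)⁻¹ ≤ (p0 i / 2)⁻¹ :=
      inv_anti₀ (half_pos (hp0' i)) (h2 i).le
    have heq : (p0 i / 2)⁻¹ = 2 * (p0 i)⁻¹ := by
      rw [inv_div, div_eq_mul_inv]
    linarith [hb, hbb, heq.symm.le]
  have hfreq : ∃ᶠ k in Filter.atTop, f (u (ns k)) ∈ K :=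
    ((hns.eventually hmemK)).frequently
  obtain ⟨a, haK, φ, hφ, hconv⟩ := hKcomp.tendsto_subseq' hfreq
  have htail : Filter.Tendsto (fun j => ns (φ j)) Filter.atTop Filter.atTop :=
    hns.comp hφ.tendsto_atTop
  have hpt' : Filter.Tendsto (fun j => u (ns (φ j))) Filter.atTop (nhds p0) :=
    hut.comp htail
  have hdem' : ∀ᶠ j in Filter.atTop, IsDemand R (u (ns (φ j))) (f (u (ns (φ j)))) := by
    filter_upwards [htail.eventually hupos] with j hj
    exact hfd _ hj
  have hadem : IsDemand R p0 a := demand_limit hC hpt' hdem' hconv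
  have haf : a = f p0 := huniq p0 hp0' a hadem
  exact ⟨φ, haf ▸ hconv⟩

end Paper
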